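/- The set TrSSYT(g,r) of transposed SSYT of content (r^g) and height at most r+1 is in bijection with the set of standard Young tableaux of size g with at most r+1 rows. -/

import Mathlib

/-- A transposed semistandard Young tableau with at most r+1 rows and content (i^g):
rows strictly increase left to right, columns weakly increase bottom to top,
each of 1,…,g appears exactly i times. Cells are `some v` (filled) or `none`. -/
structure TrSSYT (g r i : ℕ) where
  entry : Fin (r+1) → ℕ → Option ℕ
  left : ∀ (row : Fin (r+1)) (j j' : ℕ), (entry row j).isSome → j' ≤ j → (entry row j').isSome
  down : ∀ (row row' : Fin (r+1)) (j : ℕ), (entry row j).isSome → row' ≤ row → (entry row' j).isSome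
  vals : ∀ (row : Fin (r+1)) (j : ℕ) (v : ℕ), entry row j = some v → 1 ≤ v ∧ v ≤ g
  content : ∀ v : ℕ, 1 ≤ v → v ≤ g →
    {p : Fin (r+1) × ℕ | entry p.1 p.2 = some v}.ncard = i
  row_strict : ∀ (row : Fin (r+1)) (j j' : ℕ) (a b : ℕ),
    entry row j = some a → entry row j' = some b → j < j' → a < b
  col_weak : ∀ (row row' : Fin (r+1)) (j : ℕ) (a b : ℕ),
    entry row j = some a → entry row' j = some b → row < row' → a ≤ b

/-- A standard Young tableau of size g with at most r+1 rows: left-and-bottom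
justified shape, each of 1,…,g used exactly once, rows and columns strictly increasing. -/
structure SYTB (g r : ℕ) where
  entry : Fin (r+1) → ℕ → Option ℕ
  left : ∀ (row : Fin (r+1)) (j j' : ℕ), (entry row j).isSome → j' ≤ j → (entry row j').isSome
  down : ∀ (row row' : Fin (r+1)) (j : ℕ), (entry row j).isSome → row' ≤ row → (entry row' j).isSome
  vals : ∀ (row : Fin (r+1)) (j : ℕ) (v : ℕ), entry row j = some v → 1 ≤ v ∧ v ≤ g
  content : ∀ v : ℕ, 1 ≤ v → v ≤ g → ∃! p : Fin (r+1) × ℕ, entry p.1 p.2 = some v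
  row_strict : ∀ (row : Fin (r+1)) (j j' : ℕ) (a b : ℕ),
    entry row j = some a → entry row j' = some b → j < j' → a < b
  col_strict : ∀ (row row' : Fin (r+1)) (j : ℕ) (a b : ℕ),
    entry row j = some a → entry row' j = some b → row < row' → a < b

namespace Stmt4Aux
end Stmt4Aux

namespace Stmt4Aux
end Stmt4Aux


private lemma filter_head_nil {a : ℕ} {t : List ℕ} (hat : ∀ x ∈ t, a < x) :
    (a :: t).filter (· < a) = [] := by
  rw [List.filter_eq_nil_iff]
  intro x hx
  simp only [decide_eq_true_eq, not_lt]
  rcases List.mem_cons.1 hx with rfl | hx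
  · exact le_refl x
  · exact le_of_lt (hat x hx)

lemma sorted_getElem? (l : List ℕ) (hl : l.Pairwise (· < ·)) (j v : ℕ) :
    l[j]? = some v ↔ v ∈ l ∧ (l.filter (· < v)).length = j := by
  induction l generalizing j with
  | nil => simp
  | cons a t ih =>
    have hat : ∀ x ∈ t, a < x := fun x hx => (List.pairwise_cons.1 hl).1 x hx
    have ht : t.Pairwise (· < ·) := (List.pairwise_cons.1 hl).2
    cases j with
    | zero =>
      simp only [List.getElem?_cons_zero]
      constructor
      · rintro h
        injection h with h; subst h
        exact ⟨List.mem_cons_self, by simp [filter_head_nil hat]⟩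
      · rintro ⟨hv, hc⟩
        rcases List.mem_cons.1 hv with rfl | hv
        · rfl
        · exfalso
          have h1 : a ∈ (a :: t).filter (· < v) := by
            simp [List.filter_cons, hat v hv]
          rw [List.length_eq_zero_iff] at hc
          simp [hc] at h1
    | succ j =>
      simp only [List.getElem?_cons_succ]
      rw [ih ht j]
      constructor
      · rintro ⟨hv, hc⟩
        refine ⟨List.mem_cons_of_mem a hv, ?_⟩
        rw [List.filter_cons]
        simp [hat v hv, hc]
      · rintro ⟨hv, hc⟩
        have hvt : v ∈ t := by
          rcases List.mem_cons.1 hv with rfl | hv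
          · rw [filter_head_nil hat] at hc; simp at hc
          · exact hv
        refine ⟨hvt, ?_⟩
        rw [List.filter_cons] at hc
        simp [hat v hvt] at hc
        omega

lemma length_sort_filter (S : Finset ℕ) (p : ℕ → Prop) [DecidablePred p] :
    ((S.sort (· ≤ ·)).filter (fun x => decide (p x))).length = (S.filter p).card := by
  have h2 : (↑(S.sort (· ≤ ·)) : Multiset ℕ) = S.val := Finset.sort_eq S _
  have h1 : ((S.sort (· ≤ ·)).filter (fun x => decide (p x)) : Multiset ℕ)
      = Multiset.filter p S.val := by
    rw [← h2, Multiset.filter_coe]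
  have h3 := congrArg Multiset.card h1
  simp only [Multiset.coe_card] at h3
  rw [h3]
  rfl

lemma ent_eq_some_iff' {S : Finset ℕ} {j v : ℕ} :
    (S.sort (· ≤ ·))[j]? = some v ↔ v ∈ S ∧ (S.filter (· < v)).card = j := by
  rw [sorted_getElem? _ (Finset.sortedLT_sort S).pairwise]
  rw [show (fun x => decide (x < v)) = (fun x => decide ((· < v) x)) from rfl,
    length_sort_filter S (· < v), Finset.mem_sort]


/-- the `j`-th smallest element of `S`, as an `Option`. -/
def ent (S : Finset ℕ) (j : ℕ) : Option ℕ := (S.sort (· ≤ ·))[j]?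

lemma ent_isSome {S : Finset ℕ} {j : ℕ} : (ent S j).isSome ↔ j < S.card := by
  unfold ent
  rcases h : (S.sort (· ≤ ·))[j]? with _ | a <;>
    simp_all [List.getElem?_eq_some_iff, List.getElem?_eq_none_iff, Finset.length_sort]
  exact h.1

lemma ent_mem {S : Finset ℕ} {j v : ℕ} (h : ent S j = some v) : v ∈ S := by
  unfold ent at h
  rw [List.getElem?_eq_some_iff] at h
  obtain ⟨hj, rfl⟩ := h
  exact (Finset.mem_sort _).1 (List.getElem_mem hj)

lemma ent_strict {S : Finset ℕ} {j j' a b : ℕ} (ha : ent S j = some a)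
    (hb : ent S j' = some b) (hjj : j < j') : a < b := by
  unfold ent at ha hb
  rw [List.getElem?_eq_some_iff] at ha hb
  obtain ⟨hj, rfl⟩ := ha
  obtain ⟨hj', rfl⟩ := hb
  exact List.Pairwise.rel_get_of_lt (Finset.sortedLT_sort S).pairwise (by exact hjj)

lemma ent_inj {S : Finset ℕ} {j j' v : ℕ} (h : ent S j = some v) (h' : ent S j' = some v) :
    j = j' := by
  rcases lt_trichotomy j j' with hc | hc | hc
  · exact absurd (ent_strict h h' hc) (lt_irrefl v)
  · exact hc
  · exact absurd (ent_strict h' h hc) (lt_irrefl v)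

/-- characterization of `ent`. -/
lemma ent_eq_some_iff {S : Finset ℕ} {j v : ℕ} :
    ent S j = some v ↔ v ∈ S ∧ (S.filter (· < v)).card = j := ent_eq_some_iff'

lemma mem_iff_ent {S : Finset ℕ} {v : ℕ} : v ∈ S ↔ ∃ j, ent S j = some v := by
  constructor
  · intro hv
    exact ⟨(S.filter (· < v)).card, ent_eq_some_iff.2 ⟨hv, rfl⟩⟩
  · rintro ⟨j, hj⟩
    exact ent_mem hj

lemma filter_le_eq_insert {T : Finset ℕ} {b : ℕ} (hb : b ∈ T) :
    T.filter (· ≤ b) = insert b (T.filter (· < b)) := by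
  ext x
  simp only [Finset.mem_filter, Finset.mem_insert]
  constructor
  · rintro ⟨hx, hxb⟩
    rcases eq_or_lt_of_le hxb with rfl | h
    · exact Or.inl rfl
    · exact Or.inr ⟨hx, h⟩
  · rintro (rfl | ⟨hx, hxb⟩)
    · exact ⟨hb, le_refl x⟩
    · exact ⟨hx, le_of_lt hxb⟩

lemma card_filter_le {T : Finset ℕ} {b : ℕ} (hb : b ∈ T) :
    (T.filter (· ≤ b)).card = (T.filter (· < b)).card + 1 := by
  rw [filter_le_eq_insert hb, Finset.card_insert_of_notMem (by simp)]

/-- counts dominate ⇒ positionwise comparison. -/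
lemma ent_le_of_counts {S T : Finset ℕ}
    (H : ∀ v : ℕ, (T.filter (· ≤ v)).card ≤ (S.filter (· ≤ v)).card)
    {j a b : ℕ} (ha : ent S j = some a) (hb : ent T j = some b) : a ≤ b := by
  by_contra hab
  push_neg at hab  -- b < a
  obtain ⟨haS, hca⟩ := ent_eq_some_iff.1 ha
  obtain ⟨hbT, hcb⟩ := ent_eq_some_iff.1 hb
  have h1 : (T.filter (· ≤ b)).card = j + 1 := by rw [card_filter_le hbT, hcb]
  have h2 : (S.filter (· ≤ b)).card ≤ j := by
    rw [← hca]
    apply Finset.card_le_card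
    intro x hx
    simp only [Finset.mem_filter] at hx ⊢
    exact ⟨hx.1, lt_of_le_of_lt hx.2 hab⟩
  have := H b
  omega

/-- positionwise comparison ⇒ counts dominate. -/
lemma counts_of_ent_le {S T : Finset ℕ} (hcard : S.card ≤ T.card)
    (H : ∀ j a b, ent S j = some a → ent T j = some b → b ≤ a) :
    ∀ v : ℕ, (S.filter (· ≤ v)).card ≤ (T.filter (· ≤ v)).card := by
  intro v
  set c := (S.filter (· ≤ v)).card with hc
  have hcS : c ≤ S.card := Finset.card_filter_le _ _
  -- for each j < c, ent T j is some b with b ≤ v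
  have key : ∀ j, j < c → ∃ b, ent T j = some b ∧ b ≤ v := by
    intro j hj
    have hjT : j < T.card := lt_of_lt_of_le (lt_of_lt_of_le hj hcS) hcard
    have hjS : j < S.card := lt_of_lt_of_le hj hcS
    obtain ⟨a, ha⟩ := Option.isSome_iff_exists.1 (ent_isSome.2 hjS)
    obtain ⟨b, hb⟩ := Option.isSome_iff_exists.1 (ent_isSome.2 hjT)
    refine ⟨b, hb, le_trans (H j a b ha hb) ?_⟩
    -- a ≤ v since otherwise filter(≤v) ⊆ filter(<a) which has card j
    by_contra hav
    push_neg at hav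
    have hca : (S.filter (· < a)).card = j := (ent_eq_some_iff.1 ha).2
    have : (S.filter (· ≤ v)).card ≤ j := by
      rw [← hca]
      apply Finset.card_le_card
      intro x hx
      simp only [Finset.mem_filter] at hx ⊢
      exact ⟨hx.1, lt_of_le_of_lt hx.2 hav⟩
    omega
  -- map j ↦ ent T j injectively into T.filter (≤ v)
  have : (Finset.range c).card ≤ (T.filter (· ≤ v)).card := by
    apply Finset.card_le_card_of_injOn (fun j => (ent T j).getD 0)
    · intro j hj
      obtain ⟨b, hb, hbv⟩ := key j (Finset.mem_range.1 hj)
      simp only [hb, Option.getD_some, Finset.mem_filter]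
      exact Finset.mem_coe.2 (Finset.mem_filter.2 ⟨ent_mem hb, hbv⟩)
    · intro j hj j' hj' heq
      simp only at heq
      obtain ⟨b, hb, _⟩ := key j (Finset.mem_range.1 (Finset.mem_coe.1 hj))
      obtain ⟨b', hb', _⟩ := key j' (Finset.mem_range.1 (Finset.mem_coe.1 hj'))
      rw [hb, hb'] at heq
      simp only [Option.getD_some] at heq
      subst heq
      exact ent_inj hb hb'
  simpa using this

section Row
variable {g : ℕ} {E : ℕ → Option ℕ}

/-- set of values appearing in a row. -/
def rowF (g : ℕ) (E : ℕ → Option ℕ) : Finset ℕ :=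
  (Finset.Icc 1 g).filter fun v => ∃ j ∈ Finset.range g, E j = some v

variable (hleft : ∀ j j', (E j).isSome → j' ≤ j → (E j').isSome)
  (hvals : ∀ j v, E j = some v → 1 ≤ v ∧ v ≤ g)
  (hstrict : ∀ j j' a b, E j = some a → E j' = some b → j < j' → a < b)

include hleft hvals hstrict in
lemma pos_lt_val : ∀ j v, E j = some v → j < v := by
  intro j
  induction j with
  | zero => intro v hv; exact (hvals 0 v hv).1
  | succ j ih =>
    intro v hv
    have h0 : (E j).isSome := hleft (j+1) j (by simp [hv]) (Nat.le_succ j)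
    obtain ⟨u, hu⟩ := Option.isSome_iff_exists.1 h0
    have h1 := ih u hu
    have h2 := hstrict j (j+1) u v hu hv (Nat.lt_succ_self j)
    omega

include hleft hvals hstrict in
lemma mem_rowF : ∀ v, v ∈ rowF g E ↔ ∃ j, E j = some v := by
  intro v
  simp only [rowF, Finset.mem_filter, Finset.mem_Icc, Finset.mem_range]
  constructor
  · rintro ⟨_, j, _, hj⟩; exact ⟨j, hj⟩
  · rintro ⟨j, hj⟩
    have hb := hvals j v hj
    have hp := pos_lt_val hleft hvals hstrict j v hj
    exact ⟨⟨hb.1, hb.2⟩, j, by omega, hj⟩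

include hleft hvals hstrict in
lemma row_eq_ent : ∀ j, E j = ent (rowF g E) j := by
  have fwd : ∀ j v, E j = some v → ent (rowF g E) j = some v := by
    intro j v hv
    rw [ent_eq_some_iff]
    refine ⟨(mem_rowF hleft hvals hstrict v).2 ⟨j, hv⟩, ?_⟩
    have hset : (rowF g E).filter (· < v) =
        (Finset.range j).image (fun j' => (E j').getD 0) := by
      ext u
      simp only [Finset.mem_filter, Finset.mem_image, Finset.mem_range]
      constructor
      · rintro ⟨hu, huv⟩
        obtain ⟨j', hj'⟩ := (mem_rowF hleft hvals hstrict u).1 hu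
        refine ⟨j', ?_, by simp [hj']⟩
        rcases lt_trichotomy j' j with h | rfl | h
        · exact h
        · rw [hv] at hj'; injection hj' with hj'; omega
        · have := hstrict j j' v u hv hj' h; omega
      · rintro ⟨j', hj', rfl⟩
        have hs : (E j').isSome := hleft j j' (by simp [hv]) (le_of_lt hj')
        obtain ⟨u, hu⟩ := Option.isSome_iff_exists.1 hs
        simp only [hu, Option.getD_some]
        exact ⟨(mem_rowF hleft hvals hstrict u).2 ⟨j', hu⟩,
          hstrict j' j u v hu hv hj'⟩
    rw [hset, Finset.card_image_of_injOn, Finset.card_range]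
    intro a ha b hb heq
    simp only [Finset.mem_coe, Finset.mem_range] at ha hb
    have hsa : (E a).isSome := hleft j a (by simp [hv]) (le_of_lt ha)
    have hsb : (E b).isSome := hleft j b (by simp [hv]) (le_of_lt hb)
    obtain ⟨x, hx⟩ := Option.isSome_iff_exists.1 hsa
    obtain ⟨y, hy⟩ := Option.isSome_iff_exists.1 hsb
    simp only [hx, hy, Option.getD_some] at heq
    subst heq
    rcases lt_trichotomy a b with h | h | h
    · have := hstrict a b x x hx hy h; omega
    · exact h
    · have := hstrict b a x x hy hx h; omega
  intro j
  rcases hE : E j with _ | v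
  · rcases hF : ent (rowF g E) j with _ | v
    · rfl
    · exfalso
      obtain ⟨j', hj'⟩ := (mem_rowF hleft hvals hstrict v).1 (ent_mem hF)
      have := fwd j' v hj'
      have hjj : j' = j := ent_inj this hF
      subst hjj
      rw [hE] at hj'; cases hj'
  · exact (fwd j v hE).symm

include hleft hvals hstrict in
lemma isSome_iff_lt_card : ∀ j, (E j).isSome ↔ j < (rowF g E).card := by
  intro j
  rw [row_eq_ent hleft hvals hstrict j]
  exact ent_isSome

lemma rowF_subset : rowF g E ⊆ Finset.Icc 1 g := Finset.filter_subset _ _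

end Row

lemma ent_hleft (A : Finset ℕ) : ∀ j j', (ent A j).isSome → j' ≤ j → (ent A j').isSome :=
  fun j j' hs hle => ent_isSome.2 (lt_of_le_of_lt hle (ent_isSome.1 hs))

lemma ent_hvals {g : ℕ} {A : Finset ℕ} (hA : A ⊆ Finset.Icc 1 g) :
    ∀ j v, ent A j = some v → 1 ≤ v ∧ v ≤ g :=
  fun _ v h => Finset.mem_Icc.1 (hA (ent_mem h))

lemma ent_hstrict (A : Finset ℕ) :
    ∀ j j' a b, ent A j = some a → ent A j' = some b → j < j' → a < b :=
  fun _ _ _ _ ha hb h => ent_strict ha hb h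

lemma rowF_ent {g : ℕ} {A : Finset ℕ} (hA : A ⊆ Finset.Icc 1 g) :
    rowF g (fun j => ent A j) = A := by
  ext v
  rw [mem_rowF (ent_hleft A) (ent_hvals hA) (ent_hstrict A)]
  exact mem_iff_ent.symm

lemma card_mono_aux {c d : ℕ} (h : ∀ j, j < c → j < d) : c ≤ d := by
  by_contra h'
  push_neg at h'
  exact absurd (h d h') (lt_irrefl d)

lemma filter_sdiff_eq {g v : ℕ} {A : Finset ℕ} :
    (Finset.Icc 1 g \ A).filter (· ≤ v)
      = (Finset.Icc 1 g).filter (· ≤ v) \ A.filter (· ≤ v) := by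
  ext x
  simp only [Finset.mem_filter, Finset.mem_sdiff]
  tauto

lemma sdiff_counts {g : ℕ} {A B : Finset ℕ} (hA : A ⊆ Finset.Icc 1 g)
    (hB : B ⊆ Finset.Icc 1 g)
    (h : ∀ v, (A.filter (· ≤ v)).card ≤ (B.filter (· ≤ v)).card) :
    ∀ v, ((Finset.Icc 1 g \ B).filter (· ≤ v)).card
      ≤ ((Finset.Icc 1 g \ A).filter (· ≤ v)).card := by
  intro v
  rw [filter_sdiff_eq, filter_sdiff_eq,
    Finset.card_sdiff_of_subset (Finset.filter_subset_filter _ hA),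
    Finset.card_sdiff_of_subset (Finset.filter_subset_filter _ hB)]
  have hBc : (B.filter (· ≤ v)).card ≤ ((Finset.Icc 1 g).filter (· ≤ v)).card :=
    Finset.card_le_card (Finset.filter_subset_filter _ hB)
  have := h v
  omega

lemma filter_le_self {g : ℕ} {A : Finset ℕ} (hA : A ⊆ Finset.Icc 1 g) :
    A.filter (· ≤ g) = A := by
  apply Finset.filter_true_of_mem
  intro x hx
  exact (Finset.mem_Icc.1 (hA hx)).2

section Tableaux
variable {g r : ℕ}

def TrSSYT.RS (T : TrSSYT g r r) (k : Fin (r+1)) : Finset ℕ := rowF g (T.entry k)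
def SYTB.RS (Y : SYTB g r) (k : Fin (r+1)) : Finset ℕ := rowF g (Y.entry k)

lemma TrSSYT.entry_eq (T : TrSSYT g r r) (k : Fin (r+1)) (j : ℕ) :
    T.entry k j = ent (T.RS k) j :=
  row_eq_ent (T.left k) (T.vals k) (T.row_strict k) j

lemma SYTB.entry_eq (Y : SYTB g r) (k : Fin (r+1)) (j : ℕ) :
    Y.entry k j = ent (Y.RS k) j :=
  row_eq_ent (Y.left k) (Y.vals k) (Y.row_strict k) j

lemma TrSSYT.mem_RS (T : TrSSYT g r r) (k : Fin (r+1)) (v : ℕ) :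
    v ∈ T.RS k ↔ ∃ j, T.entry k j = some v :=
  mem_rowF (T.left k) (T.vals k) (T.row_strict k) v

lemma SYTB.mem_RS (Y : SYTB g r) (k : Fin (r+1)) (v : ℕ) :
    v ∈ Y.RS k ↔ ∃ j, Y.entry k j = some v :=
  mem_rowF (Y.left k) (Y.vals k) (Y.row_strict k) v

lemma TrSSYT.RS_subset (T : TrSSYT g r r) (k : Fin (r+1)) : T.RS k ⊆ Finset.Icc 1 g :=
  rowF_subset
lemma SYTB.RS_subset (Y : SYTB g r) (k : Fin (r+1)) : Y.RS k ⊆ Finset.Icc 1 g :=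
  rowF_subset

lemma TrSSYT.card_mono (T : TrSSYT g r r) {m m' : Fin (r+1)} (h : m' ≤ m) :
    (T.RS m).card ≤ (T.RS m').card := by
  apply card_mono_aux
  intro j hj
  rw [show T.RS m = rowF g (T.entry m) from rfl,
    ← isSome_iff_lt_card (T.left m) (T.vals m) (T.row_strict m)] at hj
  rw [show T.RS m' = rowF g (T.entry m') from rfl,
    ← isSome_iff_lt_card (T.left m') (T.vals m') (T.row_strict m')]
  exact T.down m m' j hj h

lemma SYTB.card_mono (Y : SYTB g r) {m m' : Fin (r+1)} (h : m' ≤ m) :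
    (Y.RS m).card ≤ (Y.RS m').card := by
  apply card_mono_aux
  intro j hj
  rw [show Y.RS m = rowF g (Y.entry m) from rfl,
    ← isSome_iff_lt_card (Y.left m) (Y.vals m) (Y.row_strict m)] at hj
  rw [show Y.RS m' = rowF g (Y.entry m') from rfl,
    ← isSome_iff_lt_card (Y.left m') (Y.vals m') (Y.row_strict m')]
  exact Y.down m m' j hj h

lemma TrSSYT.counts (T : TrSSYT g r r) {m m' : Fin (r+1)} (h : m' ≤ m) (v : ℕ) :
    ((T.RS m).filter (· ≤ v)).card ≤ ((T.RS m').filter (· ≤ v)).card := by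
  apply counts_of_ent_le (T.card_mono h) _ v
  intro j a b ha hb
  rw [← T.entry_eq] at ha hb
  rcases eq_or_lt_of_le h with rfl | h'
  · rw [ha] at hb; injection hb with hb; omega
  · exact T.col_weak m' m j b a hb ha h'

lemma SYTB.counts (Y : SYTB g r) {m m' : Fin (r+1)} (h : m' ≤ m) (v : ℕ) :
    ((Y.RS m).filter (· ≤ v)).card ≤ ((Y.RS m').filter (· ≤ v)).card := by
  apply counts_of_ent_le (Y.card_mono h) _ v
  intro j a b ha hb
  rw [← Y.entry_eq] at ha hb
  rcases eq_or_lt_of_le h with rfl | h'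
  · rw [ha] at hb; injection hb with hb; omega
  · exact le_of_lt (Y.col_strict m' m j b a hb ha h')

/-- each value in `[1,g]` is missing from exactly one row of a `TrSSYT g r r`. -/
lemma TrSSYT.exists_unique_missing (T : TrSSYT g r r) {v : ℕ} (h1 : 1 ≤ v) (h2 : v ≤ g) :
    ∃! k : Fin (r+1), v ∉ T.RS k := by
  classical
  set C : Set (Fin (r+1) × ℕ) := {p | T.entry p.1 p.2 = some v} with hC
  have hinj : Set.InjOn Prod.fst C := by
    intro p hp q hq hpq
    have : p.2 = q.2 := by
      by_contra hne
      rcases lt_or_gt_of_ne hne with hlt | hlt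
      · have := T.row_strict p.1 p.2 q.2 v v hp (by rw [hpq]; exact hq) hlt; omega
      · have := T.row_strict p.1 q.2 p.2 v v (by rw [hpq]; exact hq) hp hlt; omega
    exact Prod.ext hpq this
  have hfin : C.Finite := by
    apply Set.Finite.subset (Set.finite_univ.prod (Set.finite_Iio g))
    intro p hp
    refine ⟨Set.mem_univ _, ?_⟩
    have := pos_lt_val (T.left p.1) (T.vals p.1) (T.row_strict p.1) p.2 v hp
    simp only [Set.mem_Iio]
    omega
  have hcard : (Prod.fst '' C).ncard = r := by
    rw [Set.ncard_image_of_injOn hinj]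
    exact T.content v h1 h2
  have hfin2 : (Prod.fst '' C).Finite := hfin.image _
  set F : Finset (Fin (r+1)) := hfin2.toFinset with hF
  have hFcard : F.card = r := by
    rw [hF, ← Set.ncard_eq_toFinset_card]
    exact hcard
  have hmemF : ∀ k, k ∈ F ↔ v ∈ T.RS k := by
    intro k
    rw [hF, Set.Finite.mem_toFinset, T.mem_RS]
    constructor
    · rintro ⟨p, hp, rfl⟩; exact ⟨p.2, hp⟩
    · rintro ⟨j, hj⟩; exact ⟨(k, j), hj, rfl⟩
  have hsd : (Finset.univ \ F).card = 1 := by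
    rw [Finset.card_sdiff_of_subset (Finset.subset_univ F), hFcard]
    simp
  obtain ⟨k₀, hk₀⟩ := Finset.card_eq_one.1 hsd
  refine ⟨k₀, ?_, ?_⟩
  · intro hv
    have : k₀ ∈ F := (hmemF k₀).2 hv
    have : k₀ ∈ Finset.univ \ F := by rw [hk₀]; exact Finset.mem_singleton_self k₀
    simp only [Finset.mem_sdiff] at this
    tauto
  · intro k hk
    have : k ∈ Finset.univ \ F := by
      simp only [Finset.mem_sdiff, Finset.mem_univ, true_and]
      intro hkF
      exact hk ((hmemF k).1 hkF)
    rw [hk₀] at this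
    exact Finset.mem_singleton.1 this

/-- each value in `[1,g]` occurs in exactly one row of a `SYTB g r`. -/
lemma SYTB.exists_unique_row (Y : SYTB g r) {v : ℕ} (h1 : 1 ≤ v) (h2 : v ≤ g) :
    ∃! k : Fin (r+1), v ∈ Y.RS k := by
  obtain ⟨p, hp, hu⟩ := Y.content v h1 h2
  refine ⟨p.1, (Y.mem_RS p.1 v).2 ⟨p.2, hp⟩, ?_⟩
  intro k hk
  obtain ⟨j, hj⟩ := (Y.mem_RS k v).1 hk
  have h3 := hu (k, j) hj
  exact congrArg Prod.fst h3

end Tableaux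


section Constructions
variable {g r : ℕ}

/-- the SYT associated to a transposed SSYT. -/
def mkSY (T : TrSSYT g r r) : SYTB g r where
  entry k j := ent (Finset.Icc 1 g \ T.RS k.rev) j
  left k j j' hs hle := ent_hleft _ j j' hs hle
  down k k' j hs hle := by
    rw [ent_isSome] at hs ⊢
    refine lt_of_lt_of_le hs ?_
    have h1 : ∀ m : Fin (r+1), (Finset.Icc 1 g \ T.RS m.rev).card
        = ((Finset.Icc 1 g \ T.RS m.rev).filter (· ≤ g)).card := by
      intro m
      rw [filter_le_self (Finset.sdiff_subset)]
    rw [h1 k, h1 k']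
    exact sdiff_counts (T.RS_subset k'.rev) (T.RS_subset k.rev)
      (T.counts (Fin.rev_le_rev.2 hle)) g
  vals k j v h := Finset.mem_Icc.1 (Finset.sdiff_subset (ent_mem h))
  content v h1 h2 := by
    obtain ⟨k₀, hk₀, huniq⟩ := T.exists_unique_missing h1 h2
    have hmem : ∀ k : Fin (r+1), v ∈ Finset.Icc 1 g \ T.RS k.rev ↔ k = k₀.rev := by
      intro k
      rw [Finset.mem_sdiff, Finset.mem_Icc]
      constructor
      · rintro ⟨_, hv⟩
        have := huniq k.rev hv
        rw [← this, Fin.rev_rev]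
      · rintro rfl
        rw [Fin.rev_rev]
        exact ⟨⟨h1, h2⟩, hk₀⟩
    refine ⟨(k₀.rev, ((Finset.Icc 1 g \ T.RS k₀).filter (· < v)).card), ?_, ?_⟩
    · show ent (Finset.Icc 1 g \ T.RS k₀.rev.rev) _ = some v
      rw [Fin.rev_rev]
      exact ent_eq_some_iff.2 ⟨Finset.mem_sdiff.2 ⟨Finset.mem_Icc.2 ⟨h1, h2⟩, hk₀⟩, rfl⟩
    · rintro ⟨k, j⟩ hp
      have hk : k = k₀.rev := (hmem k).1 (ent_mem hp)
      subst hk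
      have h5 : ((Finset.Icc 1 g \ T.RS k₀.rev.rev).filter (· < v)).card = j :=
        (ent_eq_some_iff.1 hp).2
      rw [Fin.rev_rev] at h5
      rw [Prod.mk.injEq]
      exact ⟨rfl, h5.symm⟩
  row_strict k j j' a b ha hb h := ent_strict ha hb h
  col_strict k k' j a b ha hb h := by
    have hcounts : ∀ v, ((Finset.Icc 1 g \ T.RS k'.rev).filter (· ≤ v)).card
        ≤ ((Finset.Icc 1 g \ T.RS k.rev).filter (· ≤ v)).card :=
      sdiff_counts (T.RS_subset k.rev) (T.RS_subset k'.rev)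
        (T.counts (le_of_lt (Fin.rev_lt_rev.2 h)))
    have hab : a ≤ b := ent_le_of_counts hcounts ha hb
    rcases eq_or_lt_of_le hab with rfl | h'
    · exfalso
      have h1 := ent_mem ha
      have h2 := ent_mem hb
      rw [Finset.mem_sdiff] at h1 h2
      obtain ⟨ha1, ha2⟩ := h1
      have hIcc := Finset.mem_Icc.1 ha1
      obtain ⟨k₀, hk₀, huniq⟩ := T.exists_unique_missing hIcc.1 hIcc.2
      have e1 := huniq k.rev ha2
      have e2 := huniq k'.rev h2.2
      rw [← e2] at e1
      exact absurd (Fin.rev_inj.1 e1) (ne_of_lt h)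
    · exact h'

end Constructions

section Constructions2
variable {g r : ℕ}

lemma ncard_ne {n : ℕ} (x : Fin (n+1)) : {k : Fin (n+1) | k ≠ x}.ncard = n := by
  rw [show {k : Fin (n+1) | k ≠ x} = ↑(Finset.univ \ {x}) from by ext k; simp]
  rw [Set.ncard_coe_finset, Finset.card_sdiff_of_subset (by simp), Finset.card_univ]
  simp

/-- the transposed SSYT associated to a SYT. -/
def mkTr (Y : SYTB g r) : TrSSYT g r r where
  entry k j := ent (Finset.Icc 1 g \ Y.RS k.rev) j
  left k j j' hs hle := ent_hleft _ j j' hs hle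
  down k k' j hs hle := by
    rw [ent_isSome] at hs ⊢
    refine lt_of_lt_of_le hs ?_
    have h1 : ∀ m : Fin (r+1), (Finset.Icc 1 g \ Y.RS m.rev).card
        = ((Finset.Icc 1 g \ Y.RS m.rev).filter (· ≤ g)).card := by
      intro m
      rw [filter_le_self (Finset.sdiff_subset)]
    rw [h1 k, h1 k']
    exact sdiff_counts (Y.RS_subset k'.rev) (Y.RS_subset k.rev)
      (Y.counts (Fin.rev_le_rev.2 hle)) g
  vals k j v h := Finset.mem_Icc.1 (Finset.sdiff_subset (ent_mem h))
  content v h1 h2 := by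
    obtain ⟨ρ, hρ, huniq⟩ := Y.exists_unique_row h1 h2
    have hmem : ∀ k : Fin (r+1), v ∈ Finset.Icc 1 g \ Y.RS k.rev ↔ k ≠ ρ.rev := by
      intro k
      rw [Finset.mem_sdiff, Finset.mem_Icc]
      constructor
      · rintro ⟨_, hv⟩ rfl
        rw [Fin.rev_rev] at hv
        exact hv hρ
      · intro hk
        refine ⟨⟨h1, h2⟩, fun hv => hk ?_⟩
        have := huniq k.rev hv
        rw [← this, Fin.rev_rev]
    have hset : {p : Fin (r+1) × ℕ |
        (fun (k : Fin (r+1)) (j : ℕ) => ent (Finset.Icc 1 g \ Y.RS k.rev) j) p.1 p.2 = some v}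
        = (fun k : Fin (r+1) =>
            (k, ((Finset.Icc 1 g \ Y.RS k.rev).filter (· < v)).card)) '' {k | k ≠ ρ.rev} := by
      ext ⟨k, j⟩
      simp only [Set.mem_setOf_eq, Set.mem_image]
      constructor
      · intro hp
        obtain ⟨hv, hc⟩ := ent_eq_some_iff.1 hp
        exact ⟨k, (hmem k).1 hv, by rw [Prod.mk.injEq]; exact ⟨rfl, hc⟩⟩
      · rintro ⟨k', hk', heq⟩
        rw [Prod.mk.injEq] at heq
        obtain ⟨rfl, rfl⟩ := heq
        exact ent_eq_some_iff.2 ⟨(hmem k').2 hk', rfl⟩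
    show Set.ncard _ = r
    rw [hset, Set.ncard_image_of_injOn (fun a _ b _ h => congrArg Prod.fst h)]
    exact ncard_ne ρ.rev
  row_strict k j j' a b ha hb h := ent_strict ha hb h
  col_weak k k' j a b ha hb h := by
    have hcounts : ∀ v, ((Finset.Icc 1 g \ Y.RS k'.rev).filter (· ≤ v)).card
        ≤ ((Finset.Icc 1 g \ Y.RS k.rev).filter (· ≤ v)).card :=
      sdiff_counts (Y.RS_subset k.rev) (Y.RS_subset k'.rev)
        (Y.counts (le_of_lt (Fin.rev_lt_rev.2 h)))
    exact ent_le_of_counts hcounts ha hb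

end Constructions2

section Final
variable {g r : ℕ}

lemma TrSSYT.ext' {T T' : TrSSYT g r r} (h : T.entry = T'.entry) : T = T' := by
  cases T; cases T'
  simp only at h
  subst h
  rfl

lemma SYTB.ext' {Y Y' : SYTB g r} (h : Y.entry = Y'.entry) : Y = Y' := by
  cases Y; cases Y'
  simp only at h
  subst h
  rfl

lemma RS_mkSY (T : TrSSYT g r r) (k : Fin (r+1)) :
    (mkSY T).RS k = Finset.Icc 1 g \ T.RS k.rev :=
  rowF_ent Finset.sdiff_subset

lemma RS_mkTr (Y : SYTB g r) (k : Fin (r+1)) :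
    (mkTr Y).RS k = Finset.Icc 1 g \ Y.RS k.rev :=
  rowF_ent Finset.sdiff_subset

lemma mkTr_mkSY (T : TrSSYT g r r) : mkTr (mkSY T) = T := by
  apply TrSSYT.ext'
  funext k j
  show ent (Finset.Icc 1 g \ (mkSY T).RS k.rev) j = T.entry k j
  rw [RS_mkSY, Fin.rev_rev, Finset.sdiff_sdiff_eq_self (T.RS_subset k), ← T.entry_eq]

lemma mkSY_mkTr (Y : SYTB g r) : mkSY (mkTr Y) = Y := by
  apply SYTB.ext'
  funext k j
  show ent (Finset.Icc 1 g \ (mkTr Y).RS k.rev) j = Y.entry k j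
  rw [RS_mkTr, Fin.rev_rev, Finset.sdiff_sdiff_eq_self (Y.RS_subset k), ← Y.entry_eq]

end Final


/-- TrSSYT(g,r) is in bijection with the standard Young tableaux of size g
with at most r+1 rows. -/
theorem stmt_4 (g r : ℕ) : Nonempty (TrSSYT g r r ≃ SYTB g r) :=
  ⟨{ toFun := mkSY, invFun := mkTr, left_inv := mkTr_mkSY, right_inv := mkSY_mkTr }⟩
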